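/- For 0 < p ≤ 1 and ε ∈ (0,1), the p-th power of the ℓ_p norm is superadditive under suffix structure, giving (ε, ε)-smoothness: if x, y, z ∈ ℝ^m have non-negative entries, y ≤ x coordinatewise, and (1−ε)‖x‖_p^p ≤ ‖y‖_p^p, then (1−ε)‖x+z‖_p^p ≤ ‖y+z‖_p^p. -/

import Mathlib

lemma rpow_submodular {p u v w : ℝ} (hp : 0 < p) (hp1 : p ≤ 1)
    (hv : 0 ≤ v) (hvu : v ≤ u) (hw : 0 ≤ w) :
    (u + w) ^ p + v ^ p ≤ u ^ p + (v + w) ^ p := by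
  rcases eq_or_lt_of_le (show v ≤ u + w by linarith) with h | h
  · have hw0 : w = 0 := by linarith
    have huv : u = v := by linarith
    simp [hw0, huv]
  · set d : ℝ := u + w - v with hd
    have hd0 : 0 < d := by simp [hd]; linarith
    set a : ℝ := w / d with ha
    set b : ℝ := (u - v) / d with hb
    have ha0 : 0 ≤ a := div_nonneg hw hd0.le
    have hb0 : 0 ≤ b := div_nonneg (by linarith) hd0.le
    have hab : a + b = 1 := by rw [ha, hb, ← add_div, div_eq_one_iff_eq hd0.ne', hd]; ring
    have hcc := Real.concaveOn_rpow hp.le hp1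
    have h1 := hcc.2 (Set.mem_Ici.2 hv) (Set.mem_Ici.2 (by linarith : (0:ℝ) ≤ u + w)) ha0 hb0 hab
    have h2 := hcc.2 (Set.mem_Ici.2 hv) (Set.mem_Ici.2 (by linarith : (0:ℝ) ≤ u + w)) hb0 ha0
      (by linarith)
    have e1 : a • v + b • (u + w) = u := by
      simp only [smul_eq_mul, ha, hb]
      field_simp
      ring
    have e2 : b • v + a • (u + w) = v + w := by
      simp only [smul_eq_mul, ha, hb]
      field_simp
      ring
    rw [e1] at h1
    rw [e2] at h2
    simp only [smul_eq_mul] at h1 h2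
    have hv' : a * v ^ p + b * v ^ p = v ^ p := by rw [← add_mul, hab, one_mul]
    have hu' : a * (u + w) ^ p + b * (u + w) ^ p = (u + w) ^ p := by
      rw [← add_mul, hab, one_mul]
    linarith

/-- For 0 < p ≤ 1 and ε ∈ (0,1), the p-th power of the ℓ_p norm is (ε,ε)-smooth:
if y ≤ x coordinatewise (all non-negative) and (1−ε)‖x‖_p^p ≤ ‖y‖_p^p, then
(1−ε)‖x+z‖_p^p ≤ ‖y+z‖_p^p. -/
theorem lp_pow_smooth (m : ℕ) (p ε : ℝ) (hp : 0 < p) (hp1 : p ≤ 1)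
    (hε : 0 < ε) (hε1 : ε < 1)
    (x y z : Fin m → ℝ) (hx : ∀ i, 0 ≤ x i) (hy : ∀ i, 0 ≤ y i) (hz : ∀ i, 0 ≤ z i)
    (hyx : ∀ i, y i ≤ x i)
    (hsmooth : (1 - ε) * ∑ i, (x i) ^ p ≤ ∑ i, (y i) ^ p) :
    (1 - ε) * ∑ i, (x i + z i) ^ p ≤ ∑ i, (y i + z i) ^ p := by
  have key : ∑ i, ((x i + z i) ^ p + (y i) ^ p) ≤ ∑ i, ((x i) ^ p + (y i + z i) ^ p) :=
    Finset.sum_le_sum fun i _ => rpow_submodular hp hp1 (hy i) (hyx i) (hz i)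
  rw [Finset.sum_add_distrib, Finset.sum_add_distrib] at key
  have hxx : ∑ i, (x i) ^ p ≤ ∑ i, (x i + z i) ^ p :=
    Finset.sum_le_sum fun i _ => Real.rpow_le_rpow (hx i) (by linarith [hz i]) hp.le
  have hmul : ε * ∑ i, (x i) ^ p ≤ ε * ∑ i, (x i + z i) ^ p :=
    mul_le_mul_of_nonneg_left hxx hε.le
  nlinarith [key, hsmooth, hmul]
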